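/- arXiv:1605.01045 — 2 statements merged into one kernel-verified Lean document; each statement's English description precedes it below -/
import Mathlib

section
/- Let {(W_i, ω_i)} and {(V_i, ν_i)} be fusion frames for H with W_i ⊥ V_i for every i. Then Σ ω_i ν_i π_{S_W V_i} S_W⁻¹ π_{W_i} f = 0 for all f ∈ H; in particular {(S_W V_i, ν_i)} cannot be a dual fusion frame of {(W_i, ω_i)}. -/
open scoped InnerProductSpace

/-- Orthogonal projection onto a complete subspace, as an operator `H →L H`. -/
noncomputable def fusionProj {H : Type*} [NormedAddCommGroup H] [InnerProductSpace ℂ H]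
    (K : Submodule ℂ H) [CompleteSpace K] : H →L[ℂ] H :=
  K.subtypeL.comp (K.orthogonalProjectionOnto)

/-- Let `{(W i, ω i)}` and `{(V i, ν i)}` be fusion frames with `W i ⊥ V i` for all `i`.
Then `∑ ω i ν i • π_{S_W V i} S_W⁻¹ π_{W i} f = 0` for all `f`; in particular
`{(S_W V i, ν i)}` cannot be a dual fusion frame of `{(W i, ω i)}`. -/
theorem orthogonal_image_cannot_be_dual
    {H : Type*} [NormedAddCommGroup H] [InnerProductSpace ℂ H] [CompleteSpace H]
    [Nontrivial H]
    {ι : Type*} (W V : ι → Submodule ℂ H) [∀ i, CompleteSpace (W i)]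
    [∀ i, CompleteSpace (V i)]
    (ω ν : ι → ℝ) (hω : ∀ i, 0 < ω i) (hν : ∀ i, 0 < ν i)
    (A B A' B' : ℝ) (hA : 0 < A) (hAB : A ≤ B) (hA' : 0 < A') (hAB' : A' ≤ B')
    (hWframe : ∀ f : H,
      A * ‖f‖ ^ 2 ≤ ∑' i, (ω i) ^ 2 * ‖fusionProj (W i) f‖ ^ 2 ∧
        ∑' i, (ω i) ^ 2 * ‖fusionProj (W i) f‖ ^ 2 ≤ B * ‖f‖ ^ 2)
    (hVframe : ∀ f : H,
      A' * ‖f‖ ^ 2 ≤ ∑' i, (ν i) ^ 2 * ‖fusionProj (V i) f‖ ^ 2 ∧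
        ∑' i, (ν i) ^ 2 * ‖fusionProj (V i) f‖ ^ 2 ≤ B' * ‖f‖ ^ 2)
    (hperp : ∀ i, ∀ w ∈ W i, ∀ v ∈ V i, ⟪w, v⟫_ℂ = 0)
    (SW : H ≃L[ℂ] H)
    (hSW : ∀ f : H, HasSum (fun i => ((ω i) ^ 2 : ℝ) • fusionProj (W i) f) (SW f))
    [∀ i, CompleteSpace ((V i).map (((SW : H →L[ℂ] H) : H →ₗ[ℂ] H)))] :
    (∀ f : H,
      HasSum (fun i => (ω i * ν i) •
        fusionProj ((V i).map (((SW : H →L[ℂ] H) : H →ₗ[ℂ] H)))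
          (SW.symm (fusionProj (W i) f))) 0) ∧
    ¬ (∀ f : H,
      HasSum (fun i => (ω i * ν i) •
        fusionProj ((V i).map (((SW : H →L[ℂ] H) : H →ₗ[ℂ] H)))
          (SW.symm (fusionProj (W i) f))) f) := by
  -- SW is self-adjoint
  have hterm : ∀ (i : ι) (f g : H),
      ⟪((ω i) ^ 2 : ℝ) • fusionProj (W i) g, f⟫_ℂ
        = ⟪g, ((ω i) ^ 2 : ℝ) • fusionProj (W i) f⟫_ℂ := by
    intro i f g
    rw [RCLike.real_smul_eq_coe_smul (K := ℂ), RCLike.real_smul_eq_coe_smul (K := ℂ),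
      inner_smul_left, inner_smul_right]
    simp only [fusionProj, ContinuousLinearMap.coe_comp', Function.comp_apply,
      Submodule.coe_subtypeL', Submodule.coe_subtype, RCLike.conj_ofReal]
    rw [← Submodule.starProjection_apply, ← Submodule.starProjection_apply,
      Submodule.inner_starProjection_left_eq_right]
  have hSA : ∀ f g : H, ⟪g, SW f⟫_ℂ = ⟪SW g, f⟫_ℂ := by
    intro f g
    have h1 : HasSum (fun i => ⟪g, ((ω i) ^ 2 : ℝ) • fusionProj (W i) f⟫_ℂ) ⟪g, SW f⟫_ℂ :=
      (hSW f).mapL (innerSL ℂ g)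
    have h2 : HasSum (fun i => ⟪f, ((ω i) ^ 2 : ℝ) • fusionProj (W i) g⟫_ℂ) ⟪f, SW g⟫_ℂ :=
      (hSW g).mapL (innerSL ℂ f)
    have h3 : HasSum (fun i => (starRingEnd ℂ) ⟪f, ((ω i) ^ 2 : ℝ) • fusionProj (W i) g⟫_ℂ)
        ((starRingEnd ℂ) ⟪f, SW g⟫_ℂ) :=
      h2.map (starRingEnd ℂ).toAddMonoidHom continuous_star
    simp only [inner_conj_symm] at h3
    have h4 : HasSum (fun i => ⟪g, ((ω i) ^ 2 : ℝ) • fusionProj (W i) f⟫_ℂ) ⟪SW g, f⟫_ℂ := by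
      exact h3.congr_fun fun i => (hterm i f g).symm
    exact h1.unique h4
  -- each summand is zero
  have hzero : ∀ (i : ι) (f : H),
      (ω i * ν i) • fusionProj ((V i).map (((SW : H →L[ℂ] H) : H →ₗ[ℂ] H)))
        (SW.symm (fusionProj (W i) f)) = 0 := by
    intro i f
    have hmem : SW.symm (fusionProj (W i) f) ∈ ((V i).map (((SW : H →L[ℂ] H) : H →ₗ[ℂ] H)))ᗮ := by
      intro y hy
      obtain ⟨v, hv, rfl⟩ := hy
      have : ((((SW : H →L[ℂ] H) : H →ₗ[ℂ] H)) v : H) = SW v := rfl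
      rw [this, ← hSA, ContinuousLinearEquiv.apply_symm_apply]
      have hw : (fusionProj (W i) f : H) ∈ W i := by
        simp only [fusionProj, ContinuousLinearMap.coe_comp', Function.comp_apply,
          Submodule.coe_subtypeL', Submodule.coe_subtype]
        exact ((W i).orthogonalProjectionOnto f).2
      have := hperp i _ hw v hv
      rw [← inner_conj_symm, this, map_zero]
    have : fusionProj ((V i).map (((SW : H →L[ℂ] H) : H →ₗ[ℂ] H)))
        (SW.symm (fusionProj (W i) f)) = 0 := by
      simp only [fusionProj, ContinuousLinearMap.coe_comp', Function.comp_apply,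
        Submodule.coe_subtypeL', Submodule.coe_subtype] at hmem ⊢
      rw [Submodule.orthogonalProjectionOnto_apply_of_mem_orthogonal hmem]
      rfl
    rw [this, smul_zero]
  have hsum0 : ∀ f : H,
      HasSum (fun i => (ω i * ν i) •
        fusionProj ((V i).map (((SW : H →L[ℂ] H) : H →ₗ[ℂ] H)))
          (SW.symm (fusionProj (W i) f))) 0 := by
    intro f
    have : (fun i => (ω i * ν i) •
        fusionProj ((V i).map (((SW : H →L[ℂ] H) : H →ₗ[ℂ] H)))
          (SW.symm (fusionProj (W i) f))) = fun _ => (0 : H) := funext fun i => hzero i f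
    rw [this]; exact hasSum_zero
  refine ⟨hsum0, fun hdual => ?_⟩
  obtain ⟨x, hx⟩ := exists_ne (0 : H)
  exact hx ((hdual x).unique (hsum0 x))
end

section
/- Let {(W_i, 1)} be a fusion frame for H with frame operator S_W, and {h_i} a Bessel sequence of unit vectors with h_i ∈ (S_W⁻¹W_i)^⊥. Set V_i = S_W⁻¹W_i + Z_i where Z_i = span{h_i}. Then {(V_i, 1)} is a Bessel fusion sequence and a dual of {(W_i, 1)}: f = Σ π_{V_i} S_W⁻¹ π_{W_i} f for all f ∈ H. -/
open scoped InnerProductSpace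

section Aux
variable {H : Type*} [NormedAddCommGroup H] [InnerProductSpace ℂ H] [CompleteSpace H]

lemma fusionProj_apply (K : Submodule ℂ H) [CompleteSpace K] (f : H) :
    fusionProj K f = (K.orthogonalProjectionOnto f : H) := rfl

lemma fusionProj_mem (K : Submodule ℂ H) [CompleteSpace K] (f : H) :
    fusionProj K f ∈ K := (K.orthogonalProjectionOnto f).2

lemma fusionProj_eq_self {K : Submodule ℂ H} [CompleteSpace K] {f : H} (hf : f ∈ K) :
    fusionProj K f = f := Submodule.starProjection_eq_self_iff.2 hf

lemma sub_fusionProj_mem (K : Submodule ℂ H) [CompleteSpace K] (f : H) :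
    f - fusionProj K f ∈ Kᗮ := Submodule.sub_starProjection_mem_orthogonal f

lemma fusionProj_eq_zero {K : Submodule ℂ H} [CompleteSpace K] {f : H} (hf : f ∈ Kᗮ) :
    fusionProj K f = 0 := by
  rw [fusionProj_apply, Submodule.orthogonalProjectionOnto_apply_of_mem_orthogonal hf,
    Submodule.coe_zero]

lemma inner_eq_inner_fusionProj {K : Submodule ℂ H} [CompleteSpace K] (f g : H) (hg : g ∈ K) :
    ⟪g, f⟫_ℂ = ⟪g, fusionProj K f⟫_ℂ := by
  have h0 : ⟪g, f - fusionProj K f⟫_ℂ = 0 :=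
    (Submodule.mem_orthogonal K _).1 (sub_fusionProj_mem K f) g hg
  rw [inner_sub_right, sub_eq_zero] at h0
  exact h0

lemma fusionProj_sup (U Z : Submodule ℂ H) [CompleteSpace U] [CompleteSpace Z]
    [CompleteSpace ↥(U ⊔ Z)] (hZU : Z ≤ Uᗮ) (f : H) :
    fusionProj (U ⊔ Z) f = fusionProj U f + fusionProj Z f := by
  have hUZ : U ≤ Zᗮ := fun u hu => (Submodule.mem_orthogonal Z u).2
    (fun z hz => (Submodule.mem_orthogonal' U z).1 (hZU hz) u hu)
  obtain ⟨u, hu, z, hz, huz⟩ := Submodule.mem_sup.1 (fusionProj_mem (U ⊔ Z) f)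
  have hsub : ∀ (K : Submodule ℂ H) [CompleteSpace K], K ≤ U ⊔ Z →
      fusionProj K f = fusionProj K (fusionProj (U ⊔ Z) f) := by
    intro K _ hK
    have h1 : f - fusionProj (U ⊔ Z) f ∈ Kᗮ := Submodule.orthogonal_le hK (sub_fusionProj_mem _ f)
    have h2 : fusionProj K (f - fusionProj (U ⊔ Z) f) = 0 := fusionProj_eq_zero h1
    rw [map_sub, sub_eq_zero] at h2
    exact h2
  have hUv : fusionProj U (fusionProj (U ⊔ Z) f) = u := by
    rw [← huz, map_add, fusionProj_eq_self hu, fusionProj_eq_zero (hZU hz), add_zero]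
  have hZv : fusionProj Z (fusionProj (U ⊔ Z) f) = z := by
    rw [← huz, map_add, fusionProj_eq_self hz, fusionProj_eq_zero (hUZ hu), zero_add]
  rw [hsub U le_sup_left, hsub Z le_sup_right, hUv, hZv, huz]

lemma norm_fusionProj_singleton {x : H} (hx : ‖x‖ = 1) (f : H) :
    ‖fusionProj (ℂ ∙ x) f‖ = ‖⟪x, f⟫_ℂ‖ := by
  rw [fusionProj_apply, Submodule.coe_orthogonalProjectionOnto_apply, Submodule.starProjection_singleton, hx]
  simp [norm_smul, hx]

lemma re_inner_fusionProj (K : Submodule ℂ H) [CompleteSpace K] (g : H) :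
    (⟪g, fusionProj K g⟫_ℂ).re = ‖fusionProj K g‖ ^ 2 := by
  have h0 : ⟪g - fusionProj K g, fusionProj K g⟫_ℂ = 0 :=
    (Submodule.mem_orthogonal' K _).1 (sub_fusionProj_mem K g) _ (fusionProj_mem K g)
  rw [inner_sub_left, sub_eq_zero] at h0
  rw [h0]
  exact inner_self_eq_norm_sq (𝕜 := ℂ) _

end Aux

lemma fusionProj_congr {H : Type*} [NormedAddCommGroup H] [InnerProductSpace ℂ H]
    {K K' : Submodule ℂ H} [CompleteSpace K] [CompleteSpace K'] (e : K = K') (f : H) :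
    fusionProj K f = fusionProj K' f := by subst e; rfl

/-- Let `{(W i, 1)}` be a fusion frame with frame operator `S_W` and `{h i}` a Bessel
sequence of unit vectors with `h i ∈ (S_W⁻¹ W i)ᗮ`. Set `V i = S_W⁻¹ W i + span{h i}`.
Then `{(V i, 1)}` is a Bessel fusion sequence and a dual of `{(W i, 1)}`:
`f = ∑ π_{V i} S_W⁻¹ π_{W i} f` for all `f ∈ H`. -/
theorem explicit_dual_construction
    {H : Type*} [NormedAddCommGroup H] [InnerProductSpace ℂ H] [CompleteSpace H]
    {ι : Type*} (W : ι → Submodule ℂ H) [∀ i, CompleteSpace (W i)]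
    (A B : ℝ) (hA : 0 < A) (hAB : A ≤ B)
    (hframe : ∀ f : H,
      A * ‖f‖ ^ 2 ≤ ∑' i, ‖fusionProj (W i) f‖ ^ 2 ∧
        ∑' i, ‖fusionProj (W i) f‖ ^ 2 ≤ B * ‖f‖ ^ 2)
    (SW : H ≃L[ℂ] H)
    (hSW : ∀ f : H, HasSum (fun i => fusionProj (W i) f) (SW f))
    (h : ι → H) (hnorm : ∀ i, ‖h i‖ = 1)
    (D : ℝ) (hBessel : ∀ f : H, ∑' i, ‖⟪h i, f⟫_ℂ‖ ^ 2 ≤ D * ‖f‖ ^ 2)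
    (hperp : ∀ i, h i ∈ ((W i).map (((SW.symm : H →L[ℂ] H) : H →ₗ[ℂ] H)))ᗮ)
    (V : ι → Submodule ℂ H)
    (hV : ∀ i, V i = (W i).map (((SW.symm : H →L[ℂ] H) : H →ₗ[ℂ] H)) ⊔ (ℂ ∙ h i))
    [∀ i, CompleteSpace (V i)] :
    (∃ B' : ℝ, ∀ f : H, ∑' i, ‖fusionProj (V i) f‖ ^ 2 ≤ B' * ‖f‖ ^ 2) ∧
    ∀ f : H, HasSum (fun i => fusionProj (V i) (SW.symm (fusionProj (W i) f))) f := by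
  classical
  have hB : (0 : ℝ) < B := lt_of_lt_of_le hA hAB
  set U : ι → Submodule ℂ H :=
    fun i => (W i).map (((SW.symm : H →L[ℂ] H) : H →ₗ[ℂ] H)) with hU
  haveI hUc : ∀ i, CompleteSpace (U i) := by
    intro i
    have himg : (U i : Set H) = SW.symm '' (W i : Set H) := by
      simp [hU, Submodule.map_coe]
    have hclosed : IsClosed (U i : Set H) := by
      rw [himg]
      exact SW.symm.toHomeomorph.isClosedMap _
        (IsComplete.isClosed ((completeSpace_coe_iff_isComplete).1 inferInstance))
    exact hclosed.completeSpace_coe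
  have hZU : ∀ i, (ℂ ∙ h i) ≤ (U i)ᗮ := fun i =>
    (Submodule.span_singleton_le_iff_mem _ _).2 (hperp i)
  haveI hVc : ∀ i, CompleteSpace ↥(U i ⊔ (ℂ ∙ h i)) := by
    intro i; rw [← hV i]; infer_instance
  have hdecomp : ∀ i (f : H),
      fusionProj (V i) f = fusionProj (U i) f + fusionProj (ℂ ∙ h i) f := by
    intro i f
    rw [fusionProj_congr (hV i) f]
    exact fusionProj_sup (U i) (ℂ ∙ h i) (hZU i) f
  have hdual : ∀ f : H,
      HasSum (fun i => fusionProj (V i) (SW.symm (fusionProj (W i) f))) f := by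
    intro f
    have hsum : HasSum (fun i => SW.symm (fusionProj (W i) f)) f := by
      have h1 := (SW.symm : H →L[ℂ] H).hasSum (hSW f)
      simpa using h1
    have heq : ∀ i, fusionProj (V i) (SW.symm (fusionProj (W i) f))
        = SW.symm (fusionProj (W i) f) := by
      intro i
      refine fusionProj_eq_self ?_
      rw [hV i]
      exact Submodule.mem_sup_left (Submodule.mem_map_of_mem (fusionProj_mem (W i) f))
    simpa only [heq] using hsum
  set T : H →L[ℂ] H := ContinuousLinearMap.adjoint ((SW.symm : H →L[ℂ] H)) with hT
  refine ⟨⟨‖(SW : H →L[ℂ] H)‖ ^ 2 * ‖T‖ ^ 2 * B + |D|, ?_⟩, hdual⟩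
  intro f
  by_cases hs : Summable (fun i => ‖fusionProj (V i) f‖ ^ 2)
  · have hterm : ∀ i, ‖fusionProj (V i) f‖ ^ 2
        = ‖fusionProj (U i) f‖ ^ 2 + ‖⟪h i, f⟫_ℂ‖ ^ 2 := by
      intro i
      have hinner0 : ⟪fusionProj (U i) f, fusionProj (ℂ ∙ h i) f⟫_ℂ = 0 :=
        (Submodule.mem_orthogonal (U i) _).1 (hZU i (fusionProj_mem _ f)) _
          (fusionProj_mem _ f)
      rw [hdecomp i f, ← norm_fusionProj_singleton (hnorm i) f, sq, sq, sq]
      exact norm_add_sq_eq_norm_sq_add_norm_sq_of_inner_eq_zero _ _ hinner0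
    have hU_le : ∀ i, ‖fusionProj (U i) f‖ ^ 2
        ≤ ‖(SW : H →L[ℂ] H)‖ ^ 2 * ‖fusionProj (W i) (T f)‖ ^ 2 := by
      intro i
      obtain ⟨w, hw, hwu⟩ := Submodule.mem_map.1 (fusionProj_mem (U i) f)
      have hwu' : SW.symm w = fusionProj (U i) f := hwu
      have e1 : ⟪fusionProj (U i) f, f⟫_ℂ = ⟪fusionProj (U i) f, fusionProj (U i) f⟫_ℂ :=
        inner_eq_inner_fusionProj f _ (fusionProj_mem (U i) f)
      have e2 : ‖fusionProj (U i) f‖ ^ 2 = ‖⟪fusionProj (U i) f, f⟫_ℂ‖ := by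
        rw [e1, inner_self_eq_norm_sq_to_K]
        simp [norm_pow]
      have e3 : ⟪fusionProj (U i) f, f⟫_ℂ = ⟪w, T f⟫_ℂ := by
        rw [← hwu', hT]
        exact (ContinuousLinearMap.adjoint_inner_right (SW.symm : H →L[ℂ] H) w f).symm
      have e4 : ⟪w, T f⟫_ℂ = ⟪w, fusionProj (W i) (T f)⟫_ℂ :=
        inner_eq_inner_fusionProj (T f) w hw
      have e5 : ‖w‖ ≤ ‖(SW : H →L[ℂ] H)‖ * ‖fusionProj (U i) f‖ := by
        calc ‖w‖ = ‖(SW : H →L[ℂ] H) (SW.symm w)‖ := by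
              rw [ContinuousLinearEquiv.coe_coe, SW.apply_symm_apply]
          _ ≤ ‖(SW : H →L[ℂ] H)‖ * ‖SW.symm w‖ :=
              (SW : H →L[ℂ] H).le_opNorm _
          _ = ‖(SW : H →L[ℂ] H)‖ * ‖fusionProj (U i) f‖ := by rw [hwu']
      have e6 : ‖fusionProj (U i) f‖ ^ 2
          ≤ ‖(SW : H →L[ℂ] H)‖ * ‖fusionProj (U i) f‖ * ‖fusionProj (W i) (T f)‖ := by
        calc ‖fusionProj (U i) f‖ ^ 2 = ‖⟪w, fusionProj (W i) (T f)⟫_ℂ‖ := by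
              rw [e2, e3, e4]
          _ ≤ ‖w‖ * ‖fusionProj (W i) (T f)‖ := norm_inner_le_norm _ _
          _ ≤ ‖(SW : H →L[ℂ] H)‖ * ‖fusionProj (U i) f‖ * ‖fusionProj (W i) (T f)‖ := by
              have := norm_nonneg (fusionProj (W i) (T f))
              nlinarith [e5]
      rcases eq_or_lt_of_le (norm_nonneg (fusionProj (U i) f)) with h0 | h0
      · rw [← h0]
        have : (0:ℝ) ≤ ‖(SW : H →L[ℂ] H)‖ ^ 2 * ‖fusionProj (W i) (T f)‖ ^ 2 := by positivity
        nlinarith [this]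
      · have e7 : ‖fusionProj (U i) f‖
            ≤ ‖(SW : H →L[ℂ] H)‖ * ‖fusionProj (W i) (T f)‖ := by
          have := e6
          nlinarith [h0]
        calc ‖fusionProj (U i) f‖ ^ 2
            ≤ (‖(SW : H →L[ℂ] H)‖ * ‖fusionProj (W i) (T f)‖) ^ 2 :=
              pow_le_pow_left₀ (norm_nonneg _) e7 2
          _ = ‖(SW : H →L[ℂ] H)‖ ^ 2 * ‖fusionProj (W i) (T f)‖ ^ 2 := by ring
    have hsumW : Summable (fun i => ‖fusionProj (W i) (T f)‖ ^ 2) := by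
      have h1 := (innerSL ℂ (T f)).hasSum (hSW (T f))
      have h2 := Complex.reCLM.hasSum h1
      refine h2.summable.congr (fun i => ?_)
      simpa using re_inner_fusionProj (W i) (T f)
    have hsU : Summable (fun i => ‖fusionProj (U i) f‖ ^ 2) :=
      Summable.of_nonneg_of_le (fun i => by positivity) hU_le
        (hsumW.mul_left (‖(SW : H →L[ℂ] H)‖ ^ 2))
    have hsZ : Summable (fun i => ‖⟪h i, f⟫_ℂ‖ ^ 2) :=
      Summable.of_nonneg_of_le (fun i => by positivity)
        (fun i => by nlinarith [hterm i, sq_nonneg ‖fusionProj (U i) f‖]) hs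
    have hboundU : ∑' i, ‖fusionProj (U i) f‖ ^ 2
        ≤ ‖(SW : H →L[ℂ] H)‖ ^ 2 * ‖T‖ ^ 2 * B * ‖f‖ ^ 2 := by
      calc ∑' i, ‖fusionProj (U i) f‖ ^ 2
          ≤ ∑' i, ‖(SW : H →L[ℂ] H)‖ ^ 2 * ‖fusionProj (W i) (T f)‖ ^ 2 :=
            Summable.tsum_le_tsum hU_le hsU (hsumW.mul_left _)
        _ = ‖(SW : H →L[ℂ] H)‖ ^ 2 * ∑' i, ‖fusionProj (W i) (T f)‖ ^ 2 := tsum_mul_left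
        _ ≤ ‖(SW : H →L[ℂ] H)‖ ^ 2 * (B * ‖T f‖ ^ 2) := by
            exact mul_le_mul_of_nonneg_left (hframe (T f)).2 (by positivity)
        _ ≤ ‖(SW : H →L[ℂ] H)‖ ^ 2 * (B * (‖T‖ * ‖f‖) ^ 2) := by
            have h2 : ‖T f‖ ^ 2 ≤ (‖T‖ * ‖f‖) ^ 2 :=
              pow_le_pow_left₀ (norm_nonneg _) (T.le_opNorm f) 2
            exact mul_le_mul_of_nonneg_left
              (mul_le_mul_of_nonneg_left h2 hB.le) (by positivity)
        _ = ‖(SW : H →L[ℂ] H)‖ ^ 2 * ‖T‖ ^ 2 * B * ‖f‖ ^ 2 := by ring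
    have hboundZ : ∑' i, ‖⟪h i, f⟫_ℂ‖ ^ 2 ≤ |D| * ‖f‖ ^ 2 :=
      le_trans (hBessel f) (mul_le_mul_of_nonneg_right (le_abs_self D) (by positivity))
    calc ∑' i, ‖fusionProj (V i) f‖ ^ 2
        = ∑' i, (‖fusionProj (U i) f‖ ^ 2 + ‖⟪h i, f⟫_ℂ‖ ^ 2) := tsum_congr hterm
      _ = (∑' i, ‖fusionProj (U i) f‖ ^ 2) + ∑' i, ‖⟪h i, f⟫_ℂ‖ ^ 2 := Summable.tsum_add hsU hsZ
      _ ≤ ‖(SW : H →L[ℂ] H)‖ ^ 2 * ‖T‖ ^ 2 * B * ‖f‖ ^ 2 + |D| * ‖f‖ ^ 2 :=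
          add_le_add hboundU hboundZ
      _ = (‖(SW : H →L[ℂ] H)‖ ^ 2 * ‖T‖ ^ 2 * B + |D|) * ‖f‖ ^ 2 := by ring
  · rw [tsum_eq_zero_of_not_summable hs]
    have : (0:ℝ) ≤ ‖(SW : H →L[ℂ] H)‖ ^ 2 * ‖T‖ ^ 2 * B + |D| := by positivity
    nlinarith [sq_nonneg ‖f‖]
end
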